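/- Let p be a prime and n a positive integer. A function f : Z_{p^n} → Z_{p^n} is a polynomial function if and only if there exist scalars α_{k,j} in Z_{p^n}, for 0 ≤ k ≤ n−1 and 0 ≤ j ≤ p−1, such that f = Σ_{k=0}^{n−1} Σ_{j=0}^{p−1} α_{k,j} · u_k^{<j>} (pointwise); that is, the first p cyclic shifts of u_0, …, u_{n−1} already generate the submodule of polynomial functions, so every polynomial function is a linear combination of at most np of these generators. -/

import Mathlib

section aux
variable {p n : ℕ} (hp : p.Prime) (hn : 0 < n)

lemma zmod_dvd_iff (x : ZMod (p ^ n)) (hp : p.Prime) (hn : 0 < n) :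
    (p : ZMod (p ^ n)) ∣ x ↔ p ∣ x.val := by
  haveI : NeZero (p ^ n) := ⟨pow_ne_zero n hp.pos.ne'⟩
  constructor
  · rintro ⟨c, rfl⟩
    have h1 : ((p : ZMod (p ^ n)) * c) = ((p * c.val : ℕ) : ZMod (p ^ n)) := by
      push_cast [ZMod.natCast_val, ZMod.cast_id]
      ring
    rw [h1, ZMod.val_natCast]
    exact (Nat.dvd_mod_iff (dvd_pow_self p hn.ne')).mpr ⟨c.val, rfl⟩
  · rintro ⟨c, hc⟩
    refine ⟨(c : ZMod (p ^ n)), ?_⟩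
    have hx : x = ((x.val : ℕ) : ZMod (p ^ n)) := (ZMod.natCast_rightInverse x).symm
    rw [hx, hc]
    push_cast; ring
end aux

lemma zmod_pow_eq_zero {p n : ℕ} (hp : p.Prime) (x : ZMod (p ^ n))
    (hx : (p : ZMod (p ^ n)) ∣ x) {k : ℕ} (hk : n ≤ k) : x ^ k = 0 := by
  obtain ⟨c, rfl⟩ := hx
  calc ((p : ZMod (p ^ n)) * c) ^ k
      = (p : ZMod (p ^ n)) ^ n * ((p : ZMod (p^n)) ^ (k - n) * c ^ k) := by
        rw [mul_pow, show (p : ZMod (p^n)) ^ k = (p:ZMod (p^n)) ^ n * (p:ZMod (p^n)) ^ (k - n) by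
          rw [← pow_add, Nat.add_sub_cancel' hk]]; ring
    _ = 0 := by
        have : ((p : ZMod (p ^ n)) ^ n) = ((p ^ n : ℕ) : ZMod (p ^ n)) := by push_cast; ring
        rw [this, ZMod.natCast_self, zero_mul]

lemma totient_ge {p n : ℕ} (hp : p.Prime) (hn : 0 < n) : n ≤ Nat.totient (p ^ n) := by
  rw [Nat.totient_prime_pow hp hn]
  have h1 : n ≤ 2 ^ (n - 1) := by
    have := Nat.lt_two_pow_self (n := n - 1)
    omega
  calc n ≤ 2 ^ (n-1) := h1
    _ ≤ p ^ (n-1) := Nat.pow_le_pow_left hp.two_le _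
    _ ≤ p ^ (n-1) * (p - 1) := Nat.le_mul_of_pos_right _ (by have := hp.two_le; omega)

lemma zmod_pow_totient_eq_one {p n : ℕ} (hp : p.Prime) (hn : 0 < n) (x : ZMod (p ^ n))
    (hx : ¬ (p : ZMod (p ^ n)) ∣ x) : x ^ Nat.totient (p ^ n) = 1 := by
  haveI : NeZero (p ^ n) := ⟨pow_ne_zero n hp.pos.ne'⟩
  have hcop : Nat.Coprime x.val (p ^ n) := by
    rw [Nat.coprime_pow_right_iff hn]
    exact Nat.coprime_comm.mp ((hp.coprime_iff_not_dvd).mpr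
      (fun h => hx ((zmod_dvd_iff x hp hn).mpr h)))
  have := ZMod.pow_totient (ZMod.unitOfCoprime x.val hcop)
  have h2 : ((ZMod.unitOfCoprime x.val hcop : ZMod (p ^ n))) = x :=
    ZMod.natCast_rightInverse x
  calc x ^ Nat.totient (p ^ n) = ((ZMod.unitOfCoprime x.val hcop : ZMod (p^n))) ^ Nat.totient (p ^ n) := by rw [h2]
    _ = (((ZMod.unitOfCoprime x.val hcop) ^ Nat.totient (p ^ n) : (ZMod (p^n))ˣ) : ZMod (p^n)) := by push_cast; ring
    _ = 1 := by rw [this]; rfl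

open scoped Classical in
lemma key_if {p n : ℕ} (hp : p.Prime) (hn : 0 < n) (y : ZMod (p ^ n)) (k : ℕ) :
    y ^ k - y ^ (k + Nat.totient (p ^ n)) =
      if (p : ZMod (p ^ n)) ∣ y then y ^ k else 0 := by
  by_cases h : (p : ZMod (p ^ n)) ∣ y
  · rw [if_pos h, pow_add, zmod_pow_eq_zero hp y h (totient_ge hp hn), mul_zero, sub_zero]
  · rw [if_neg h, pow_add, zmod_pow_totient_eq_one hp hn y h, mul_one, sub_self]

open scoped Classical in
theorem poly_fun_iff_combination_of_first_p_shifts (p n : ℕ) (hp : p.Prime) (hn : 0 < n)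
    (f : ZMod (p ^ n) → ZMod (p ^ n)) :
    (∃ g : Polynomial (ZMod (p ^ n)), ∀ x, f x = g.eval x) ↔
      ∃ α : ℕ → ℕ → ZMod (p ^ n),
        f = ∑ k ∈ Finset.range n, ∑ j ∈ Finset.range p,
          α k j • (fun i : ZMod (p ^ n) =>
            if i + (j : ZMod (p ^ n)) ∈ Ideal.span {(p : ZMod (p ^ n))}
            then (i + (j : ZMod (p ^ n))) ^ k else 0) := by
  haveI : NeZero (p ^ n) := ⟨pow_ne_zero n hp.pos.ne'⟩
  haveI : NeZero p := ⟨hp.pos.ne'⟩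
  have hpn : p ≤ p ^ n := Nat.le_self_pow hn.ne' p
  set t := Nat.totient (p ^ n) with ht
  constructor
  · rintro ⟨g, hg⟩
    refine ⟨fun k j => (g.comp (Polynomial.X - Polynomial.C (j : ZMod (p ^ n)))).coeff k, ?_⟩
    funext i
    simp only [Finset.sum_apply, Pi.smul_apply, smul_eq_mul]
    -- the unique shift j0
    set j0 : ℕ := (-(i.val : ZMod p)).val with hj0def
    have hj0lt : j0 < p := ZMod.val_lt _
    have hcast : ((j0 : ℕ) : ZMod p) = -(i.val : ZMod p) := ZMod.natCast_rightInverse _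
    have hcond : ∀ j : ℕ, j < p →
        ((i + (j : ZMod (p ^ n)) ∈ Ideal.span {(p : ZMod (p ^ n))}) ↔ j = j0) := by
      intro j hj
      rw [Ideal.mem_span_singleton, zmod_dvd_iff _ hp hn]
      have hval : (i + (j : ZMod (p ^ n))).val = (i.val + j) % p ^ n := by
        rw [ZMod.val_add, ZMod.val_natCast, Nat.mod_eq_of_lt (lt_of_lt_of_le hj hpn)]
      rw [hval, Nat.dvd_mod_iff (dvd_pow_self p hn.ne'),
        ← ZMod.natCast_eq_zero_iff]
      constructor
      · intro h
        have : (j : ZMod p) = (j0 : ZMod p) := by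
          rw [hcast]
          have : (i.val : ZMod p) + (j : ZMod p) = 0 := by push_cast at h ⊢; exact h
          linear_combination this
        have := congrArg ZMod.val this
        rwa [ZMod.val_natCast, ZMod.val_natCast, Nat.mod_eq_of_lt hj,
          Nat.mod_eq_of_lt hj0lt] at this
      · rintro rfl
        push_cast
        rw [hcast]; ring
    have hdvd : (p : ZMod (p ^ n)) ∣ i + (j0 : ZMod (p ^ n)) := by
      rw [← Ideal.mem_span_singleton]
      exact (hcond j0 hj0lt).mpr rfl
    set y : ZMod (p ^ n) := i + (j0 : ZMod (p ^ n)) with hy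
    have hsum : ∀ k, (∑ j ∈ Finset.range p,
        (g.comp (Polynomial.X - Polynomial.C (j : ZMod (p ^ n)))).coeff k *
          (if i + (j : ZMod (p ^ n)) ∈ Ideal.span {(p : ZMod (p ^ n))}
            then (i + (j : ZMod (p ^ n))) ^ k else 0)) =
        (g.comp (Polynomial.X - Polynomial.C (j0 : ZMod (p ^ n)))).coeff k * y ^ k := by
      intro k
      rw [Finset.sum_eq_single j0]
      · rw [if_pos ((hcond j0 hj0lt).mpr rfl)]
      · intro j hj hne
        rw [if_neg (fun h => hne ((hcond j (Finset.mem_range.mp hj)).mp h)), mul_zero]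
      · intro h; exact absurd (Finset.mem_range.mpr hj0lt) h
    rw [Finset.sum_congr rfl (fun k _ => hsum k)]
    set h : Polynomial (ZMod (p ^ n)) := g.comp (Polynomial.X - Polynomial.C (j0 : ZMod (p ^ n)))
      with hh
    have heval : f i = h.eval y := by
      rw [hg, hh, Polynomial.eval_comp]
      simp [hy]
    rw [heval, Polynomial.eval_eq_sum_range]
    set N := max n (h.natDegree + 1) with hN
    have h1 : (∑ k ∈ Finset.range (h.natDegree + 1), h.coeff k * y ^ k) =
        ∑ k ∈ Finset.range N, h.coeff k * y ^ k := by
      refine Finset.sum_subset (Finset.range_subset_range.mpr (le_max_right _ _)) ?_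
      intro k _ hk
      rw [Polynomial.coeff_eq_zero_of_natDegree_lt (by
        simp only [Finset.mem_range, not_lt] at hk; omega), zero_mul]
    have h2 : (∑ k ∈ Finset.range n, h.coeff k * y ^ k) =
        ∑ k ∈ Finset.range N, h.coeff k * y ^ k := by
      refine Finset.sum_subset (Finset.range_subset_range.mpr (le_max_left _ _)) ?_
      intro k _ hk
      simp only [Finset.mem_range, not_lt] at hk
      rw [zmod_pow_eq_zero hp y hdvd hk, mul_zero]
    rw [h1, ← h2]
  · rintro ⟨α, rfl⟩
    refine ⟨∑ k ∈ Finset.range n, ∑ j ∈ Finset.range p,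
      Polynomial.C (α k j) * ((Polynomial.X + Polynomial.C (j : ZMod (p ^ n))) ^ k -
        (Polynomial.X + Polynomial.C (j : ZMod (p ^ n))) ^ (k + t)), ?_⟩
    intro x
    rw [Polynomial.eval_finset_sum]
    simp only [Finset.sum_apply, Pi.smul_apply, smul_eq_mul, Polynomial.eval_finset_sum,
      Polynomial.eval_mul, Polynomial.eval_C, Polynomial.eval_sub, Polynomial.eval_pow,
      Polynomial.eval_add, Polynomial.eval_X]
    refine Finset.sum_congr rfl fun k _ => Finset.sum_congr rfl fun j _ => ?_
    rw [key_if hp hn (x + (j : ZMod (p ^ n))) k, Ideal.mem_span_singleton]
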